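/- For every integer V ≥ 2 and every integer x ≥ 3, with W = V^(x+2) - 1, the triple A = W^(x+2), B = W^(x+1), C = W^x · V satisfies min(A, B, C) / gcd(A, B, C) = V. -/

import Mathlib

theorem stmt_3 (V x : ℕ) (hV : 2 ≤ V) (hx : 3 ≤ x) (W A B C : ℕ)
    (hW : W = V ^ (x + 2) - 1)
    (hA : A = W ^ (x + 2)) (hB : B = W ^ (x + 1)) (hC : C = W ^ x * V) :
    min A (min B C) / Nat.gcd A (Nat.gcd B C) = V := by
  have hVpow : V + 2 ≤ V ^ (x + 2) := by
    calc V + 2 ≤ V * V := by nlinarith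
    _ = V ^ 2 := by ring
    _ ≤ V ^ (x + 2) := Nat.pow_le_pow_right (by omega) (by omega)
  have hW1 : W + 1 = V ^ (x + 2) := by omega
  have hVW : V < W := by omega
  have hWpos : 0 < W ^ x := Nat.pow_pos (n := x) (by omega)
  have hcop : Nat.Coprime W V := by
    have h1 : Nat.Coprime W (W + 1) := by simp
    rw [hW1] at h1
    exact (Nat.coprime_pow_right_iff (by omega) _ _).mp h1
  -- compute min
  have hCB : C < B := by
    rw [hB, hC, pow_succ]
    exact (Nat.mul_lt_mul_left hWpos).mpr hVW
  have hBA : B < A := by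
    rw [hA, hB]
    exact Nat.pow_lt_pow_right (by omega) (by omega)
  have hmin : min A (min B C) = C := by omega
  have hgcdBC : Nat.gcd B C = W ^ x := by
    rw [hB, hC, pow_succ, Nat.gcd_mul_left, hcop.gcd_eq_one, mul_one]
  have hgcd : Nat.gcd A (Nat.gcd B C) = W ^ x := by
    rw [hgcdBC, Nat.gcd_eq_right]
    rw [hA]
    exact pow_dvd_pow W (by omega)
  rw [hmin, hgcd, hC, Nat.mul_div_cancel_left _ hWpos]
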